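/- arXiv:2211.15381 — 2 statements merged into one kernel-verified Lean document; each statement's English description precedes it below -/
import Mathlib

section
/- (Exponential weights regret bound) Let m ≥ 1 and T ≥ 1, and let ℓ : Fin m × Fin T → [0,1] be an arbitrary array of losses. Define weights p_{i,t} = exp(-η Σ_{s<t} ℓ(i,s)) / Σ_j exp(-η Σ_{s<t} ℓ(j,s)) with η = √(8 ln m / T). Then Σ_{t=1}^T Σ_i p_{i,t} ℓ(i,t) - min_{i} Σ_{t=1}^T ℓ(i,t) ≤ √((T/2) ln m). -/
set_option maxHeartbeats 1000000

open Real Finset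

lemma bern_hoeffding (p : ℝ) (hp0 : 0 ≤ p) (hp1 : p ≤ 1) (h : ℝ) (hh : h ≤ 0) :
    (1 - p) + p * Real.exp h ≤ Real.exp (p * h + h ^ 2 / 8) := by
  set D : ℝ → ℝ := fun x => (1 - p) + p * Real.exp x with hDdef
  have hD : ∀ x, 0 < D x := by
    intro x
    rcases lt_or_eq_of_le hp1 with h1 | h1
    · have : 0 < 1 - p := by linarith
      have : 0 ≤ p * Real.exp x := mul_nonneg hp0 (Real.exp_pos x).le
      simp only [hDdef]; linarith
    · simp only [hDdef]; rw [h1]; simpa using Real.exp_pos x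
  have hDd : ∀ x, HasDerivAt D (p * Real.exp x) x := by
    intro x
    exact ((Real.hasDerivAt_exp x).const_mul p).const_add (1 - p)
  set g' : ℝ → ℝ := fun x => p + x / 4 - p * Real.exp x / D x with hg'def
  set g : ℝ → ℝ := fun x => p * x + x ^ 2 / 8 - Real.log (D x) with hgdef
  have hgd : ∀ x, HasDerivAt g (g' x) x := by
    intro x
    have h1 : HasDerivAt (fun x => Real.log (D x)) (p * Real.exp x / D x) x :=
      (hDd x).log (hD x).ne'
    have h2 : HasDerivAt (fun x : ℝ => p * x + x ^ 2 / 8) (p + x / 4) x := by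
      have := ((hasDerivAt_id x).const_mul p).add
        (((hasDerivAt_pow 2 x)).div_const 8)
      refine this.congr_deriv ?_
      norm_num
      ring
    exact h2.sub h1
  have hg'd : ∀ x, HasDerivAt g'
      (1/4 - (p * Real.exp x * D x - p * Real.exp x * (p * Real.exp x)) / (D x) ^ 2) x := by
    intro x
    have h1 : HasDerivAt (fun x => p * Real.exp x / D x)
        ((p * Real.exp x * D x - p * Real.exp x * (p * Real.exp x)) / (D x) ^ 2) x :=
      ((Real.hasDerivAt_exp x).const_mul p).div (hDd x) (hD x).ne'
    have h2 : HasDerivAt (fun x : ℝ => p + x / 4) (1/4) x := by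
      simpa using ((hasDerivAt_id x).div_const 4).const_add p
    exact h2.sub h1
  have hg'mono : Monotone g' := by
    apply monotone_of_deriv_nonneg
    · exact fun x => (hg'd x).differentiableAt
    · intro x
      rw [(hg'd x).deriv]
      set u := p * Real.exp x / D x with hu
      have hDx := hD x
      have key : (p * Real.exp x * D x - p * Real.exp x * (p * Real.exp x)) / (D x) ^ 2
          = u - u ^ 2 := by
        rw [hu]
        field_simp
      rw [key]
      nlinarith [sq_nonneg (u - 1/2)]
  have hg'0 : g' 0 = 0 := by
    simp [hg'def, hDdef]
  have hg'le : ∀ x ≤ 0, g' x ≤ 0 := fun x hx => hg'0 ▸ hg'mono hx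
  have hganti : AntitoneOn g (Set.Iic 0) := by
    apply antitoneOn_of_deriv_nonpos (convex_Iic 0)
    · exact fun x _ => (hgd x).continuousAt.continuousWithinAt
    · exact fun x _ => (hgd x).differentiableAt.differentiableWithinAt
    · intro x hx
      rw [interior_Iic] at hx
      rw [(hgd x).deriv]
      exact hg'le x hx.le
  have hg0 : g 0 = 0 := by simp [hgdef, hDdef]
  have : g 0 ≤ g h := hganti hh Set.self_mem_Iic hh
  rw [hg0] at this
  have hlog : Real.log (D h) ≤ p * h + h ^ 2 / 8 := by
    simp only [hgdef] at this; linarith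
  calc D h ≤ Real.exp (p * h + h ^ 2 / 8) :=
    (Real.log_le_iff_le_exp (hD h)).mp hlog

lemma mgf_bound {ι : Type*} [Fintype ι] [Nonempty ι] (w X : ι → ℝ)
    (hw0 : ∀ i, 0 ≤ w i) (hw1 : ∑ i, w i = 1)
    (hX0 : ∀ i, 0 ≤ X i) (hX1 : ∀ i, X i ≤ 1) (h : ℝ) (hh : h ≤ 0) :
    ∑ i, w i * Real.exp (h * X i) ≤
      Real.exp (h * (∑ i, w i * X i) + h ^ 2 / 8) := by
  have step1 : ∀ i, Real.exp (h * X i) ≤ (1 - X i) + X i * Real.exp h := by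
    intro i
    have := convexOn_exp.2 (Set.mem_univ (0:ℝ)) (Set.mem_univ h)
      (by linarith [hX1 i] : (0:ℝ) ≤ 1 - X i) (hX0 i) (by ring)
    simpa [smul_eq_mul, mul_comm] using this
  set Xb := ∑ i, w i * X i with hXb
  have hXb0 : 0 ≤ Xb := Finset.sum_nonneg fun i _ => mul_nonneg (hw0 i) (hX0 i)
  have hXb1 : Xb ≤ 1 := by
    rw [hXb, ← hw1]
    exact Finset.sum_le_sum fun i _ => by nlinarith [hw0 i, hX1 i]
  calc ∑ i, w i * Real.exp (h * X i)
      ≤ ∑ i, w i * ((1 - X i) + X i * Real.exp h) :=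
        Finset.sum_le_sum fun i _ => mul_le_mul_of_nonneg_left (step1 i) (hw0 i)
    _ = (1 - Xb) + Xb * Real.exp h := by
        rw [hXb]
        simp only [mul_add, mul_sub, mul_one, Finset.sum_add_distrib, Finset.sum_sub_distrib]
        rw [hw1, Finset.sum_mul]
        have : ∑ x, w x * (X x * rexp h) = ∑ i, w i * X i * rexp h :=
          Finset.sum_congr rfl fun i _ => by ring
        rw [this]
    _ ≤ Real.exp (Xb * h + h ^ 2 / 8) := bern_hoeffding Xb hXb0 hXb1 h hh
    _ = Real.exp (h * Xb + h ^ 2 / 8) := by rw [mul_comm Xb h]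

theorem exp_weights_regret (m T : ℕ) (hm : 1 ≤ m) (hT : 1 ≤ T)
    (ℓ : Fin m → Fin T → ℝ) (hℓ0 : ∀ i t, 0 ≤ ℓ i t) (hℓ1 : ∀ i t, ℓ i t ≤ 1)
    (η : ℝ) (hη : η = Real.sqrt (8 * Real.log m / T))
    (p : Fin m → Fin T → ℝ)
    (hp : ∀ i t, p i t =
      Real.exp (-η * ∑ s ∈ Finset.Iio t, ℓ i s) /
        ∑ j, Real.exp (-η * ∑ s ∈ Finset.Iio t, ℓ j s)) :
    (∑ t, ∑ i, p i t * ℓ i t) -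
        Finset.univ.inf' ⟨⟨0, hm⟩, Finset.mem_univ _⟩ (fun i => ∑ t, ℓ i t) ≤
      Real.sqrt ((T / 2) * Real.log m) := by
  have hmN : Nonempty (Fin m) := ⟨⟨0, hm⟩⟩
  have hTN : Nonempty (Fin T) := ⟨⟨0, hT⟩⟩
  -- denominators are positive; p sums to 1
  have hdenom : ∀ t : Fin T, 0 < ∑ j, Real.exp (-η * ∑ s ∈ Finset.Iio t, ℓ j s) :=
    fun t => Finset.sum_pos (fun j _ => Real.exp_pos _) Finset.univ_nonempty
  have hp0 : ∀ i t, 0 ≤ p i t := fun i t => by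
    rw [hp]; exact div_nonneg (Real.exp_pos _).le (hdenom t).le
  have hpsum : ∀ t : Fin T, ∑ i, p i t = 1 := by
    intro t
    simp only [hp]
    rw [← Finset.sum_div, div_self (hdenom t).ne']
  rcases eq_or_lt_of_le hm with h1 | h1
  · -- m = 1 case
    have hm1 : m = 1 := h1.symm
    subst hm1
    have hpone : ∀ (i : Fin 1) (t : Fin T), p i t = 1 := by
      intro i t
      have := hpsum t
      rwa [Fin.sum_univ_one, Subsingleton.elim (0 : Fin 1) i] at this
    have hL : (∑ t, ∑ i, p i t * ℓ i t) = ∑ t, ℓ 0 t := by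
      apply Finset.sum_congr rfl
      intro t _
      rw [Fin.sum_univ_one, hpone, one_mul]
    have hinf : Finset.univ.inf' ⟨⟨0, hm⟩, Finset.mem_univ _⟩
        (fun i : Fin 1 => ∑ t, ℓ i t) = ∑ t, ℓ 0 t := by
      refine le_antisymm (Finset.inf'_le _ (Finset.mem_univ 0)) ?_
      exact Finset.le_inf' _ _ fun i _ => le_of_eq (by rw [Subsingleton.elim i (0 : Fin 1)])
    rw [hL, hinf, sub_self]
    exact Real.sqrt_nonneg _
  · -- m ≥ 2 case
    have hlogm : 0 < Real.log m := Real.log_pos (by exact_mod_cast h1)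
    have hT0 : (0:ℝ) < T := by exact_mod_cast hT
    have hη2 : η ^ 2 = 8 * Real.log m / T := by
      rw [hη, Real.sq_sqrt (by positivity)]
    have hηpos : 0 < η := by
      rw [hη]; exact Real.sqrt_pos.mpr (by positivity)
    -- cumulative sums and weights
    set S : Fin m → ℕ → ℝ :=
      fun i n => ∑ s ∈ Finset.univ.filter (fun s : Fin T => (s:ℕ) < n), ℓ i s with hSdef
    set W : ℕ → ℝ := fun n => ∑ j, Real.exp (-η * S j n) with hWdef
    have hfilter : ∀ t : Fin T,
        Finset.univ.filter (fun s : Fin T => (s:ℕ) < (t:ℕ)) = Finset.Iio t := by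
      intro t; ext s
      simp only [Finset.mem_filter, Finset.mem_univ, true_and, Finset.mem_Iio]
      exact Fin.lt_def.symm
    have hSt : ∀ (i : Fin m) (t : Fin T), S i (t:ℕ) = ∑ s ∈ Finset.Iio t, ℓ i s := by
      intro i t; rw [hSdef]; simp only; rw [hfilter]
    have hWt : ∀ t : Fin T, W (t:ℕ) = ∑ j, Real.exp (-η * ∑ s ∈ Finset.Iio t, ℓ j s) := by
      intro t
      rw [hWdef]
      exact Finset.sum_congr rfl fun j _ => by rw [hSt]
    have hWpos : ∀ n, 0 < W n :=
      fun n => Finset.sum_pos (fun j _ => Real.exp_pos _) Finset.univ_nonempty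
    have hpt : ∀ (j : Fin m) (t : Fin T), p j t = Real.exp (-η * S j (t:ℕ)) / W (t:ℕ) := by
      intro j t
      rw [hp, hSt, hWt]
    -- step recursion for S
    have hSstep : ∀ (i : Fin m) (n : ℕ) (hn : n < T),
        S i (n+1) = S i n + ℓ i ⟨n, hn⟩ := by
      intro i n hn
      have hins : Finset.univ.filter (fun s : Fin T => (s:ℕ) < n + 1) =
          insert (⟨n, hn⟩ : Fin T) (Finset.univ.filter (fun s : Fin T => (s:ℕ) < n)) := by
        ext s
        simp only [Finset.mem_filter, Finset.mem_univ, true_and, Finset.mem_insert,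
          Fin.ext_iff]
        omega
      rw [hSdef]
      simp only
      rw [hins, Finset.sum_insert (by simp)]
      ring
    -- per-step bound
    have hstep : ∀ (n : ℕ) (hn : n < T),
        W (n+1) ≤ W n * Real.exp (-η * (∑ i, p i ⟨n, hn⟩ * ℓ i ⟨n, hn⟩) + η^2/8) := by
      intro n hn
      set t : Fin T := ⟨n, hn⟩ with ht
      have expand : W (n+1) = W n * ∑ j, p j t * Real.exp (-η * ℓ j t) := by
        rw [hWdef]
        simp only
        rw [Finset.mul_sum]
        apply Finset.sum_congr rfl
        intro j _
        rw [hSstep j n hn, hpt j t]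
        simp only [ht, Fin.val_mk]
        rw [mul_add, Real.exp_add]
        have hWne := (hWpos n).ne'
        field_simp
        rw [hWdef]
        simp only [neg_mul]
      rw [expand]
      have := mgf_bound (fun j => p j t) (fun j => ℓ j t)
        (fun j => hp0 j t) (hpsum t) (fun j => hℓ0 j t) (fun j => hℓ1 j t)
        (-η) (by linarith)
      have h2 : ∑ j, p j t * Real.exp (-η * ℓ j t) ≤
          Real.exp (-η * (∑ i, p i t * ℓ i t) + η^2/8) := by
        convert this using 3 <;> ring
      exact mul_le_mul_of_nonneg_left h2 (hWpos n).le
    -- define per-round mixture loss as ℕ-indexed function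
    set B : ℕ → ℝ := fun k =>
      if hk : k < T then ∑ i, p i ⟨k, hk⟩ * ℓ i ⟨k, hk⟩ else 0 with hBdef
    -- induction
    have main : ∀ n, n ≤ T →
        W n ≤ m * Real.exp (-η * (∑ k ∈ Finset.range n, B k) + n * η^2/8) := by
      intro n
      induction n with
      | zero =>
        intro _
        have hz : ∀ j : Fin m, -η * S j 0 = 0 := by
          intro j
          have hz0 : S j 0 = 0 := by rw [hSdef]; simp
          rw [hz0, mul_zero]
        have hW0 : W 0 = m := by
          rw [hWdef]
          simp only [hz, Real.exp_zero, Finset.sum_const, Finset.card_univ,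
            Fintype.card_fin, nsmul_eq_mul, mul_one]
        rw [hW0]
        simp
      | succ n ih =>
        intro hn1
        push_cast
        have hn : n < T := hn1
        have hWn := ih hn.le
        have hBn : B n = ∑ i, p i ⟨n, hn⟩ * ℓ i ⟨n, hn⟩ := by
          rw [hBdef]; simp only; rw [dif_pos hn]
        calc W (n+1) ≤ W n * Real.exp (-η * B n + η^2/8) := by
              rw [hBn]; exact hstep n hn
          _ ≤ (m * Real.exp (-η * (∑ k ∈ Finset.range n, B k) + n * η^2/8)) *
                Real.exp (-η * B n + η^2/8) :=
              mul_le_mul_of_nonneg_right hWn (Real.exp_pos _).le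
          _ = m * Real.exp (-η * (∑ k ∈ Finset.range (n+1), B k) + (n+1) * η^2/8) := by
              rw [mul_assoc, ← Real.exp_add, Finset.sum_range_succ]
              congr 1
              push_cast
              ring
    -- total mixture loss
    have hBtot : ∑ k ∈ Finset.range T, B k = ∑ t, ∑ i, p i t * ℓ i t := by
      rw [← Fin.sum_univ_eq_sum_range]
      apply Finset.sum_congr rfl
      intro t _
      rw [hBdef]
      simp only
      rw [dif_pos t.isLt]
    -- lower bound via best expert
    obtain ⟨istar, _, histar⟩ := Finset.exists_mem_eq_inf' (⟨⟨0, hm⟩, Finset.mem_univ _⟩ :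
      (Finset.univ : Finset (Fin m)).Nonempty) (fun i => ∑ t, ℓ i t)
    have hSfull : ∀ i : Fin m, S i T = ∑ t, ℓ i t := by
      intro i
      rw [hSdef]
      simp only
      apply Finset.sum_congr
      · ext s; simp [s.isLt]
      · intros; rfl
    have hlower : Real.exp (-η * ∑ t, ℓ istar t) ≤ W T := by
      rw [hWdef]
      simp only
      rw [← hSfull istar]
      refine Finset.single_le_sum (f := fun j => Real.exp (-η * S j T))
        (fun j _ => (Real.exp_pos _).le) (Finset.mem_univ istar)
    -- combine
    have hcomb := le_trans hlower (main T le_rfl)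
    rw [hBtot] at hcomb
    set A := ∑ t, ∑ i, p i t * ℓ i t with hA
    set L := ∑ t, ℓ istar t with hLdef
    have hm0 : (0:ℝ) < m := by positivity
    have hexp : (m:ℝ) * Real.exp (-η * A + T * η^2/8) =
        Real.exp (Real.log m + (-η * A + T * η^2/8)) := by
      have h := Real.exp_add (Real.log m) (-η * A + T * η^2/8)
      rw [Real.exp_log hm0] at h
      exact h.symm
    rw [hexp] at hcomb
    have hlin : -η * L ≤ Real.log m + (-η * A + T * η^2/8) := Real.exp_le_exp.mp hcomb
    -- arithmetic finish
    have hTη2 : (T:ℝ) * η^2 = 8 * Real.log m := by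
      rw [hη2]; field_simp
    have hkey : η * (A - L) ≤ 2 * Real.log m := by
      have h8 : (T:ℝ) * η^2 / 8 = Real.log m := by linarith
      nlinarith [hlin, h8]
    have hAL : A - L ≤ 2 * Real.log m / η := by
      rw [le_div_iff₀ hηpos, mul_comm]
      exact hkey
    have hsqrt : Real.sqrt ((T / 2) * Real.log m) = 2 * Real.log m / η := by
      have hpos : 0 < 2 * Real.log m / η := by positivity
      rw [show ((T:ℝ) / 2) * Real.log m = (2 * Real.log m / η)^2 from ?_,
        Real.sqrt_sq hpos.le]
      rw [div_pow, hη2]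
      rw [eq_div_iff (by positivity)]
      field_simp
      ring
    rw [histar, hsqrt]
    exact hAL
end

section
/- (Anytime regret bound with time-varying learning rate) Let m ≥ 2 and losses ℓ(i,t) ∈ [0,1] for i ∈ {1,...,m}, t ∈ {1,...,T}. Define p_{i,t} = exp(-η_t Σ_{s<t} ℓ(i,s)) / Σ_j exp(-η_t Σ_{s<t} ℓ(j,s)) with η_t = √(8 ln m / t). Then Σ_{t=1}^T Σ_i p_{i,t} ℓ(i,t) - min_i Σ_{t=1}^T ℓ(i,t) ≤ 2√((T/2) ln m) + √((ln m)/8). -/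
open Real Finset in
lemma hoeffding_fin {m : ℕ} (p x : Fin m → ℝ)
    (hp : ∀ i, 0 ≤ p i) (hp1 : ∑ i, p i = 1)
    (hx0 : ∀ i, 0 ≤ x i) (hx1 : ∀ i, x i ≤ 1) (s : ℝ) :
    Real.log (∑ i, p i * Real.exp (s * x i)) ≤ s * (∑ i, p i * x i) + s ^ 2 / 8 := by
  set μ : ℝ := ∑ i, p i * x i with hμ
  set Z : ℝ → ℝ := fun u => ∑ i, p i * Real.exp (u * x i) with hZdef
  set Z₁ : ℝ → ℝ := fun u => ∑ i, p i * x i * Real.exp (u * x i) with hZ₁def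
  set Z₂ : ℝ → ℝ := fun u => ∑ i, p i * x i ^ 2 * Real.exp (u * x i) with hZ₂def
  have hZpos : ∀ u, 0 < Z u := by
    intro u
    obtain ⟨i, -, hi⟩ := Finset.exists_ne_zero_of_sum_ne_zero (by rw [hp1]; norm_num :
      ∑ i : Fin m, p i ≠ 0)
    exact Finset.sum_pos' (fun j _ => mul_nonneg (hp j) (Real.exp_pos _).le)
      ⟨i, Finset.mem_univ i, mul_pos ((hp i).lt_of_ne (Ne.symm hi)) (Real.exp_pos _)⟩
  have hZd : ∀ u, HasDerivAt Z (Z₁ u) u := by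
    intro u
    have : HasDerivAt Z (∑ i : Fin m, p i * (Real.exp (u * x i) * x i)) u :=
      HasDerivAt.fun_sum fun i _ => by
        simpa using (((hasDerivAt_id u).mul_const (x i)).exp).const_mul (p i)
    convert this using 1
    simp only [hZ₁def]
    apply Finset.sum_congr rfl; intro i _; ring
  have hZ₁d : ∀ u, HasDerivAt Z₁ (Z₂ u) u := by
    intro u
    have : HasDerivAt Z₁ (∑ i : Fin m, p i * x i * (Real.exp (u * x i) * x i)) u :=
      HasDerivAt.fun_sum fun i _ => by
        simpa using (((hasDerivAt_id u).mul_const (x i)).exp).const_mul (p i * x i)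
    convert this using 1
    simp only [hZ₂def]
    apply Finset.sum_congr rfl; intro i _; ring
  -- first derivative of log Z
  set D : ℝ → ℝ := fun u => Z₁ u / Z u with hDdef
  have hDd : ∀ u, HasDerivAt D ((Z₂ u * Z u - Z₁ u * Z₁ u) / (Z u) ^ 2) u := fun u =>
    (hZ₁d u).div (hZd u) (hZpos u).ne'
  have hD'le : ∀ u, (Z₂ u * Z u - Z₁ u * Z₁ u) / (Z u) ^ 2 ≤ 1 / 4 := by
    intro u
    rw [div_le_iff₀ (pow_pos (hZpos u) 2)]
    have h21 : Z₂ u ≤ Z₁ u := Finset.sum_le_sum fun i _ => by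
      have h0 := hx0 i; have h1 := hx1 i
      have he := (Real.exp_pos (u * x i)).le
      nlinarith [mul_nonneg (mul_nonneg (hp i) he) (mul_nonneg h0 (by linarith : (0:ℝ) ≤ 1 - x i))]
    have h1nonneg : 0 ≤ Z₁ u := Finset.sum_nonneg fun i _ =>
      mul_nonneg (mul_nonneg (hp i) (hx0 i)) (Real.exp_pos _).le
    have h1Z : Z₁ u ≤ Z u := Finset.sum_le_sum fun i _ => by
      have h1 := hx1 i; have he := (Real.exp_pos (u * x i)).le
      nlinarith [mul_nonneg (mul_nonneg (hp i) he) (by linarith : (0:ℝ) ≤ 1 - x i)]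
    nlinarith [sq_nonneg (Z u - 2 * Z₁ u), hZpos u]
  -- G = derivative of u*μ + u²/8 - log (Z u)
  set G : ℝ → ℝ := fun u => μ + u / 4 - D u with hGdef
  have hGd : ∀ u, HasDerivAt G (1 / 4 - (Z₂ u * Z u - Z₁ u * Z₁ u) / (Z u) ^ 2) u := by
    intro u
    have h1 : HasDerivAt (fun u : ℝ => μ + u / 4) (1 / 4) u := by
      simpa using ((hasDerivAt_id u).div_const 4).const_add μ
    simpa using h1.fun_sub (hDd u)
  have hGmono : Monotone G := by
    apply monotone_of_deriv_nonneg
    · exact fun u => (hGd u).differentiableAt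
    · intro u
      rw [(hGd u).deriv]
      linarith [hD'le u]
  have hZzero : Z 0 = 1 := by simp [hZdef, hp1]
  have hZ₁zero : Z₁ 0 = μ := by simp [hZ₁def, hμ]
  have hG0 : G 0 = 0 := by simp [hGdef, hDdef, hZzero, hZ₁zero]
  set g : ℝ → ℝ := fun u => u * μ + u ^ 2 / 8 - Real.log (Z u) with hgdef
  have hgd : ∀ u, HasDerivAt g (G u) u := by
    intro u
    have h1 : HasDerivAt (fun u : ℝ => u * μ + u ^ 2 / 8) (μ + u / 4) u := by
      have := ((hasDerivAt_pow 2 u).div_const 8).const_add (u * μ)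
      have h2 := (hasDerivAt_id u).mul_const μ
      refine (h2.fun_add ((hasDerivAt_pow 2 u).div_const 8)).congr_deriv ?_
      ring_nf
    have h3 : HasDerivAt (fun u => Real.log (Z u)) (D u) u := by
      simpa [hDdef] using (hZd u).log (hZpos u).ne'
    simpa [hGdef] using h1.fun_sub h3
  have hg0 : g 0 = 0 := by simp [hgdef, hZzero]
  have key : 0 ≤ g s := by
    rcases le_or_gt s 0 with hs | hs
    · have hanti : AntitoneOn g (Set.Iic 0) := by
        apply antitoneOn_of_deriv_nonpos (convex_Iic 0)
        · exact fun u _ => (hgd u).continuousAt.continuousWithinAt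
        · exact fun u _ => (hgd u).differentiableAt.differentiableWithinAt
        · intro u hu
          rw [(hgd u).deriv]
          have : G u ≤ G 0 := hGmono (by simpa using (interior_subset hu : u ∈ Set.Iic 0))
          simpa [hG0] using this
      have := hanti (Set.mem_Iic.2 hs) (Set.mem_Iic.2 le_rfl) hs
      simpa [hg0] using this
    · have hmono : MonotoneOn g (Set.Ici 0) := by
        apply monotoneOn_of_deriv_nonneg (convex_Ici 0)
        · exact fun u _ => (hgd u).continuousAt.continuousWithinAt
        · exact fun u _ => (hgd u).differentiableAt.differentiableWithinAt
        · intro u hu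
          rw [(hgd u).deriv]
          have h0u : (0:ℝ) ≤ u := le_of_lt (by simpa using (hu : u ∈ interior (Set.Ici 0)))
          have : G 0 ≤ G u := hGmono h0u
          simpa [hG0] using this
      have := hmono (Set.mem_Ici.2 le_rfl) (Set.mem_Ici.2 hs.le) hs.le
      simpa [hg0] using this
  have : Real.log (Z s) ≤ s * μ + s ^ 2 / 8 := by
    have := key; simp only [hgdef] at this; linarith
  simpa [hZdef] using this

open Real Finset in
lemma log_avg_exp_mono {m : ℕ} (hm : 1 ≤ m) (L : Fin m → ℝ) {a b : ℝ}
    (ha : 0 < a) (hab : a ≤ b) :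
    Real.log ((∑ i, Real.exp (-a * L i)) / m) / a ≤
      Real.log ((∑ i, Real.exp (-b * L i)) / m) / b := by
  have hb : 0 < b := ha.trans_le hab
  have hc0 : (0:ℝ) < a / b := div_pos ha hb
  have hc1 : a / b ≤ 1 := (div_le_one hb).2 hab
  have hmpos : (0:ℝ) < m := by exact_mod_cast hm
  haveI : NeZero m := ⟨by omega⟩
  have hne : (Finset.univ : Finset (Fin m)).Nonempty := Finset.univ_nonempty
  have hSb : (0:ℝ) < ∑ i, Real.exp (-b * L i) :=
    Finset.sum_pos (fun i _ => Real.exp_pos _) hne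
  have hSa : (0:ℝ) < ∑ i, Real.exp (-a * L i) :=
    Finset.sum_pos (fun i _ => Real.exp_pos _) hne
  -- Jensen with concave rpow
  have hjen := (Real.concaveOn_rpow hc0.le hc1).le_map_sum
    (t := Finset.univ) (w := fun _ : Fin m => 1 / (m:ℝ))
    (p := fun i => Real.exp (-b * L i))
    (fun i _ => by positivity)
    (by simp)
    (fun i _ => Set.mem_Ici.2 (Real.exp_pos _).le)
  simp only [smul_eq_mul] at hjen
  have hrw : ∀ i : Fin m, (Real.exp (-b * L i)) ^ (a/b) = Real.exp (-a * L i) := by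
    intro i
    rw [Real.rpow_def_of_pos (Real.exp_pos _), Real.log_exp]
    field_simp
  have hlhs : (∑ i, 1/(m:ℝ) * (Real.exp (-b * L i)) ^ (a/b))
      = (∑ i, Real.exp (-a * L i)) / m := by
    rw [Finset.sum_div]
    refine Finset.sum_congr rfl fun i _ => ?_
    rw [hrw i]; ring
  have hrhs : (∑ i, 1/(m:ℝ) * Real.exp (-b * L i))
      = (∑ i, Real.exp (-b * L i)) / m := by
    rw [Finset.sum_div]
    refine Finset.sum_congr rfl fun i _ => ?_
    ring
  rw [hlhs, hrhs] at hjen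
  have hlog := Real.log_le_log (by positivity) hjen
  rw [Real.log_rpow (by positivity)] at hlog
  rw [div_le_div_iff₀ ha hb]
  have hb' : b ≠ 0 := hb.ne'
  calc Real.log ((∑ i, Real.exp (-a * L i)) / m) * b
      ≤ (a / b * Real.log ((∑ i, Real.exp (-b * L i)) / m)) * b := by
        exact mul_le_mul_of_nonneg_right hlog hb.le
    _ = Real.log ((∑ i, Real.exp (-b * L i)) / m) * a := by field_simp

lemma sum_inv_sqrt (T : ℕ) :
    ∑ n ∈ Finset.range T, 1 / Real.sqrt (n + 1) ≤ 2 * Real.sqrt T := by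
  induction T with
  | zero => simp
  | succ n ih =>
    rw [Finset.sum_range_succ]
    have ha : (0:ℝ) ≤ (n:ℝ) := by positivity
    have hb : (0:ℝ) < Real.sqrt ((n:ℝ)+1) := Real.sqrt_pos.2 (by positivity)
    have hsa : Real.sqrt (n:ℝ) ^ 2 = (n:ℝ) := Real.sq_sqrt ha
    have hsb : Real.sqrt ((n:ℝ)+1) ^ 2 = (n:ℝ)+1 := Real.sq_sqrt (by positivity)
    have key : 1 / Real.sqrt ((n:ℝ)+1) ≤ 2 * Real.sqrt ((n:ℝ)+1) - 2 * Real.sqrt (n:ℝ) := by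
      rw [div_le_iff₀ hb]
      have hnn : 0 ≤ Real.sqrt (n:ℝ) := Real.sqrt_nonneg _
      nlinarith [sq_nonneg (Real.sqrt ((n:ℝ)+1) - Real.sqrt (n:ℝ)),
        mul_nonneg hnn hb.le]
    push_cast
    linarith [ih]

theorem exp_weights_anytime_regret (m T : ℕ) (hm : 2 ≤ m) (hT : 1 ≤ T)
    (ℓ : Fin m → Fin T → ℝ) (hℓ0 : ∀ i t, 0 ≤ ℓ i t) (hℓ1 : ∀ i t, ℓ i t ≤ 1)
    (η : Fin T → ℝ) (hη : ∀ t, η t = Real.sqrt (8 * Real.log m / ((t : ℕ) + 1)))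
    (p : Fin m → Fin T → ℝ)
    (hp : ∀ i t, p i t =
      Real.exp (-η t * ∑ s ∈ Finset.Iio t, ℓ i s) /
        ∑ j, Real.exp (-η t * ∑ s ∈ Finset.Iio t, ℓ j s)) :
    (∑ t, ∑ i, p i t * ℓ i t) -
        Finset.univ.inf' ⟨⟨0, by omega⟩, Finset.mem_univ _⟩ (fun i => ∑ t, ℓ i t) ≤
      2 * Real.sqrt ((T / 2) * Real.log m) + Real.sqrt (Real.log m / 8) := by
  haveI : NeZero m := ⟨by omega⟩
  have hm1 : (1:ℝ) < m := by exact_mod_cast hm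
  have hlm : 0 < Real.log m := Real.log_pos hm1
  set lm : ℝ := Real.log m with hlmdef
  -- cumulative losses
  set C : ℕ → Fin m → ℝ :=
    fun n i => ∑ s ∈ Finset.univ.filter (fun s : Fin T => (s:ℕ) < n), ℓ i s with hCdef
  set ηn : ℕ → ℝ := fun n => Real.sqrt (8 * lm / n) with hηndef
  set Z : ℝ → ℕ → ℝ := fun e n => ∑ i, Real.exp (-e * C n i) with hZdef
  set g : ℕ → ℝ := fun n => (lm - Real.log (Z (ηn n) n)) / ηn n with hgdef
  have hηpos : ∀ n : ℕ, 1 ≤ n → 0 < ηn n := by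
    intro n hn
    simp only [hηndef]
    apply Real.sqrt_pos.2
    have : (0:ℝ) < n := by exact_mod_cast hn
    positivity
  have hZpos : ∀ e n, 0 < Z e n := fun e n =>
    Finset.sum_pos (fun i _ => Real.exp_pos _) Finset.univ_nonempty
  have hC0 : ∀ i, C 0 i = 0 := by intro i; simp [hCdef]
  have hCiio : ∀ (t : Fin T) (i : Fin m), (∑ s ∈ Finset.Iio t, ℓ i s) = C t.val i := by
    intro t i
    apply Finset.sum_congr _ (fun _ _ => rfl)
    ext s
    simp only [Finset.mem_Iio, Finset.mem_filter, Finset.mem_univ, true_and, Fin.lt_def]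
  have hCsucc : ∀ (t : Fin T) (i : Fin m), C (t.val + 1) i = C t.val i + ℓ i t := by
    intro t i
    have hset : Finset.univ.filter (fun s : Fin T => (s:ℕ) < t.val + 1)
        = insert t (Finset.univ.filter (fun s : Fin T => (s:ℕ) < t.val)) := by
      ext s
      simp only [Finset.mem_insert, Finset.mem_filter, Finset.mem_univ, true_and, Fin.ext_iff]
      omega
    simp only [hCdef]
    rw [hset, Finset.sum_insert (by simp)]
    ring
  have hCT : ∀ i, C T i = ∑ t, ℓ i t := by
    intro i
    simp only [hCdef]
    apply Finset.sum_congr _ (fun _ _ => rfl)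
    apply Finset.filter_true_of_mem
    intro s _
    exact s.isLt
  have hZm : ∀ e, Z e 0 = m := by
    intro e
    simp [hZdef, hC0, Real.exp_zero, Finset.card_univ]
  have hg0 : g 0 = 0 := by
    simp [hgdef, hZm, hlmdef]
  -- per-step bound
  have hstep : ∀ t : Fin T,
      ∑ i, p i t * ℓ i t ≤ g (t.val + 1) - g t.val + ηn (t.val + 1) / 8 := by
    intro t
    have hepos : 0 < ηn (t.val + 1) := hηpos _ (by omega)
    set e : ℝ := ηn (t.val + 1) with hedef
    have hηt : η t = e := by
      rw [hη t, hedef, hηndef]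
      push_cast
      norm_num
    have hdenpos : 0 < ∑ j, Real.exp (-η t * ∑ s ∈ Finset.Iio t, ℓ j s) :=
      Finset.sum_pos (fun i _ => Real.exp_pos _) Finset.univ_nonempty
    have pnn : ∀ i, 0 ≤ p i t := fun i => by rw [hp i t]; positivity
    have psum : ∑ i, p i t = 1 := by
      simp only [hp]
      rw [← Finset.sum_div, div_self hdenpos.ne']
    have hhoef := hoeffding_fin (fun i => p i t) (fun i => ℓ i t) pnn psum
      (fun i => hℓ0 i t) (fun i => hℓ1 i t) (-e)
    have hden : (∑ j, Real.exp (-η t * ∑ s ∈ Finset.Iio t, ℓ j s)) = Z e t.val := by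
      refine Finset.sum_congr rfl fun j _ => ?_
      rw [hηt, hCiio t j]
    have hkey : (∑ i, p i t * Real.exp (-e * ℓ i t)) = Z e (t.val + 1) / Z e t.val := by
      have : Z e (t.val + 1) / Z e t.val
          = ∑ i, Real.exp (-e * C (t.val + 1) i) / Z e t.val := by
        rw [← Finset.sum_div]
      rw [this]
      refine Finset.sum_congr rfl fun i _ => ?_
      rw [hp i t, hden, hηt, hCiio t i, div_mul_eq_mul_div]
      congr 1
      rw [← Real.exp_add, hCsucc t i]
      ring_nf
    rw [hkey, Real.log_div (hZpos _ _).ne' (hZpos _ _).ne'] at hhoef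
    have hmain : (∑ i, p i t * ℓ i t - e / 8) * e
        ≤ Real.log (Z e t.val) - Real.log (Z e (t.val + 1)) := by nlinarith [hhoef]
    have h1 : ∑ i, p i t * ℓ i t - e / 8
        ≤ (Real.log (Z e t.val) - Real.log (Z e (t.val + 1))) / e :=
      (le_div_iff₀ hepos).2 hmain
    -- monotonicity step
    have hmono : g t.val ≤ (lm - Real.log (Z e t.val)) / e := by
      rcases Nat.eq_zero_or_pos t.val with h0 | hpos1
      · rw [h0, hg0]
        rw [show Z e 0 = (m:ℝ) from hZm e, ← hlmdef]
        simp
      · have hab : e ≤ ηn t.val := by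
          rw [hedef, hηndef]
          apply Real.sqrt_le_sqrt
          apply div_le_div_of_nonneg_left (by positivity) (by exact_mod_cast hpos1)
          push_cast; linarith
        have hj := log_avg_exp_mono (by omega : 1 ≤ m) (C t.val) hepos hab
        have hma : ((m:ℝ)) ≠ 0 := by positivity
        rw [Real.log_div (hZpos e t.val).ne' hma,
            Real.log_div (hZpos (ηn t.val) t.val).ne' hma] at hj
        rw [← hlmdef] at hj
        simp only [hgdef]
        have hbpos : 0 < ηn t.val := hηpos _ hpos1
        have := hj
        rw [div_le_div_iff₀ hepos hbpos] at this
        rw [div_le_div_iff₀ hbpos hepos]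
        nlinarith [this]
    have hgsucc : g (t.val + 1) = (lm - Real.log (Z e (t.val + 1))) / e := by
      simp only [hgdef, hedef]
    rw [hgsucc]
    have : (lm - Real.log (Z e (t.val + 1))) / e - (lm - Real.log (Z e t.val)) / e
        = (Real.log (Z e t.val) - Real.log (Z e (t.val + 1))) / e := by
      rw [div_sub_div_same]
      ring_nf
    linarith [h1, hmono, this.ge]
  -- sum up
  have hsum : ∑ t : Fin T, ∑ i, p i t * ℓ i t
      ≤ g T + (1 / 8) * ∑ n ∈ Finset.range T, ηn (n + 1) := by
    have h1 := Finset.sum_le_sum (fun t (_ : t ∈ Finset.univ) => hstep t)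
    have h2 : ∑ t : Fin T, (g (t.val + 1) - g t.val + ηn (t.val + 1) / 8)
        = ∑ n ∈ Finset.range T, (g (n + 1) - g n + ηn (n + 1) / 8) :=
      Fin.sum_univ_eq_sum_range (fun n => g (n + 1) - g n + ηn (n + 1) / 8) T
    rw [h2, Finset.sum_add_distrib, Finset.sum_range_sub g, hg0] at h1
    calc ∑ t : Fin T, ∑ i, p i t * ℓ i t ≤ _ := h1
      _ = g T + (1 / 8) * ∑ n ∈ Finset.range T, ηn (n + 1) := by
        rw [Finset.mul_sum]
        congr 1
        · ring
        · exact Finset.sum_congr rfl fun n _ => by ring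
  -- bound g T
  obtain ⟨i₀, -, hinf⟩ := Finset.exists_mem_eq_inf'
    (⟨⟨0, by omega⟩, Finset.mem_univ _⟩ : (Finset.univ : Finset (Fin m)).Nonempty)
    (fun i => ∑ t, ℓ i t)
  rw [hinf]
  have hηT : 0 < ηn T := hηpos T hT
  have hgT : g T ≤ lm / ηn T + ∑ t, ℓ i₀ t := by
    have hsingle : Real.exp (-(ηn T) * C T i₀) ≤ Z (ηn T) T :=
      Finset.single_le_sum (fun i (_ : i ∈ Finset.univ) => (Real.exp_pos (-(ηn T) * C T i)).le)
        (Finset.mem_univ i₀)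
    have hlog : -(ηn T) * C T i₀ ≤ Real.log (Z (ηn T) T) := by
      calc -(ηn T) * C T i₀ = Real.log (Real.exp (-(ηn T) * C T i₀)) := (Real.log_exp _).symm
        _ ≤ _ := Real.log_le_log (Real.exp_pos _) hsingle
    simp only [hgdef]
    rw [div_le_iff₀ hηT]
    rw [hCT i₀] at hlog
    have : (lm / ηn T + ∑ t, ℓ i₀ t) * ηn T = lm + ηn T * ∑ t, ℓ i₀ t := by
      field_simp
    rw [this]
    linarith
  -- arithmetic
  have hTpos : (0:ℝ) < T := by exact_mod_cast hT
  have hA : lm / ηn T = Real.sqrt ((T:ℝ) * lm / 8) := by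
    have hmul : Real.sqrt ((T:ℝ) * lm / 8) * ηn T = lm := by
      simp only [hηndef]
      rw [← Real.sqrt_mul (by positivity)]
      rw [show (T:ℝ) * lm / 8 * (8 * lm / (T:ℝ)) = lm ^ 2 by field_simp]
      exact Real.sqrt_sq hlm.le
    rw [div_eq_iff hηT.ne']
    exact hmul.symm
  have hterm : ∀ n : ℕ, ηn (n + 1) = Real.sqrt (8 * lm) * (1 / Real.sqrt ((n:ℝ) + 1)) := by
    intro n
    simp only [hηndef]
    push_cast
    rw [Real.sqrt_div (by positivity)]
    ring
  have hsum2 : ∑ n ∈ Finset.range T, ηn (n + 1)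
      ≤ Real.sqrt (8 * lm) * (2 * Real.sqrt T) := by
    calc ∑ n ∈ Finset.range T, ηn (n + 1)
        = Real.sqrt (8 * lm) * ∑ n ∈ Finset.range T, 1 / Real.sqrt ((n:ℝ) + 1) := by
          rw [Finset.mul_sum]
          exact Finset.sum_congr rfl fun n _ => hterm n
      _ ≤ _ := mul_le_mul_of_nonneg_left (sum_inv_sqrt T) (Real.sqrt_nonneg _)
  have hsqrt16 : Real.sqrt (8 * lm * (T:ℝ)) = 4 * Real.sqrt ((T:ℝ) / 2 * lm) := by
    rw [show 8 * lm * (T:ℝ) = 16 * ((T:ℝ) / 2 * lm) by ring,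
        Real.sqrt_mul (by norm_num : (0:ℝ) ≤ 16),
        show Real.sqrt 16 = 4 by
          rw [show (16:ℝ) = 4 ^ 2 by norm_num, Real.sqrt_sq (by norm_num : (0:ℝ) ≤ 4)]]
  have hB : (1 / 8) * (Real.sqrt (8 * lm) * (2 * Real.sqrt T))
      ≤ Real.sqrt ((T:ℝ) / 2 * lm) := by
    rw [show Real.sqrt (8 * lm) * (2 * Real.sqrt (T:ℝ))
        = 2 * (Real.sqrt (8 * lm) * Real.sqrt (T:ℝ)) by ring,
      ← Real.sqrt_mul (by positivity), hsqrt16]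
    linarith [Real.sqrt_nonneg ((T:ℝ) / 2 * lm)]
  have hC2 : Real.sqrt ((T:ℝ) * lm / 8) ≤ Real.sqrt ((T:ℝ) / 2 * lm) := by
    apply Real.sqrt_le_sqrt
    nlinarith [hTpos, hlm]
  have hfin : (1 / 8 : ℝ) * ∑ n ∈ Finset.range T, ηn (n + 1)
      ≤ Real.sqrt ((T:ℝ) / 2 * lm) := by
    calc (1 / 8 : ℝ) * ∑ n ∈ Finset.range T, ηn (n + 1)
        ≤ (1 / 8) * (Real.sqrt (8 * lm) * (2 * Real.sqrt T)) := by linarith [hsum2]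
      _ ≤ _ := hB
  have hrhs : 0 ≤ Real.sqrt (lm / 8) := Real.sqrt_nonneg _
  have hfinal : ∑ t : Fin T, ∑ i, p i t * ℓ i t - ∑ t, ℓ i₀ t
      ≤ 2 * Real.sqrt ((T:ℝ) / 2 * lm) + Real.sqrt (lm / 8) := by
    have h3 : lm / ηn T ≤ Real.sqrt ((T:ℝ) / 2 * lm) := by rw [hA]; exact hC2
    linarith [hgT, hfin]
  linarith [hfinal]
end
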